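/- Suppose σ_g = id_A for all g ∈ G (twisted group ring case). Then the center of A ⋊_α^σ G consists of those ∑_g r_g g̅ with each r_s ∈ Z(A) and r_{ts⁻¹} α(ts⁻¹,s) = r_{s⁻¹t} α(s,s⁻¹t) for all s,t ∈ G. -/

import Mathlib

/-- A `G`-crossed system `{A, G, σ, α}`: a unital ring `A`, a group `G`,
`σ : G → Aut(A)` and a `σ`-cocycle `α : G × G → U(A)` satisfying the
crossed-system axioms (i)-(iii). -/
structure CrossedSystem (A : Type*) [Ring A] (G : Type*) [Group G] where
  σ : G → RingAut A
  α : G → G → Aˣ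
  compat : ∀ x y : G, ∀ a : A,
    σ x (σ y a) = (α x y : A) * σ (x * y) a * ((α x y)⁻¹ : Aˣ)
  cocycle : ∀ x y z : G,
    (α x y : A) * (α (x * y) z : A) = σ x (α y z : A) * (α x (y * z) : A)
  unit_right : ∀ x : G, α x 1 = 1
  unit_left : ∀ x : G, α 1 x = 1

variable {A : Type*} [Ring A] {G : Type*} [Group G]

/-- Multiplication of the crossed product `A ⋊_α^σ G`, realized on the free
left `A`-module `G →₀ A`: `(a x̄)(b ȳ) = a σ_x(b) α(x,y) (x*y)‾`. -/
noncomputable def cmul (C : CrossedSystem A G) (f g : G →₀ A) : G →₀ A :=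
  f.sum fun s a => g.sum fun t b =>
    Finsupp.single (s * t) (a * C.σ s b * (C.α s t : A))

/-- The element `1_A ē` of the crossed product. -/
noncomputable def cone : G →₀ A := Finsupp.single 1 1

/-- The canonical embedding `ι : A → A ⋊_α^σ G`, `a ↦ a ē`; its range is `Ã`. -/
noncomputable def cemb (a : A) : G →₀ A := Finsupp.single 1 a

/-- The commutant `Comm(Ã)` of the embedded base ring in the crossed product. -/
noncomputable def cCommutant (C : CrossedSystem A G) : Set (G →₀ A) :=
  {x | ∀ a : A, cmul C (cemb a) x = cmul C x (cemb a)}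

/-- `I` is a (non-unital) two-sided ideal of the crossed product `A ⋊_α^σ G`. -/

private lemma eval_right' (f : G →₀ A) (t g : G) (c : G → A → A) (hc : ∀ s, c s 0 = 0) :
    (f.sum fun s a => Finsupp.single (s * t) (c s a)) g = c (g * t⁻¹) (f (g * t⁻¹)) := by
  classical
  rw [Finsupp.sum_apply, Finsupp.sum, Finset.sum_eq_single (g * t⁻¹)]
  · simp [Finsupp.single_apply]
  · intro s hs hne
    rw [Finsupp.single_apply, if_neg]
    intro h; apply hne; rw [← h]; group
  · intro h
    rw [Finsupp.notMem_support_iff.mp h, hc]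
    simp

private lemma eval_left' (f : G →₀ A) (t g : G) (c : G → A → A) (hc : ∀ s, c s 0 = 0) :
    (f.sum fun s a => Finsupp.single (t * s) (c s a)) g = c (t⁻¹ * g) (f (t⁻¹ * g)) := by
  classical
  rw [Finsupp.sum_apply, Finsupp.sum, Finset.sum_eq_single (t⁻¹ * g)]
  · simp [Finsupp.single_apply]
  · intro s hs hne
    rw [Finsupp.single_apply, if_neg]
    intro h; apply hne; rw [← h]; group
  · intro h
    rw [Finsupp.notMem_support_iff.mp h, hc]
    simp

private lemma cmul_single_right' (C : CrossedSystem A G) (f : G →₀ A) (t : G) (b : A) :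
    cmul C f (Finsupp.single t b)
      = f.sum fun s a => Finsupp.single (s * t) (a * C.σ s b * (C.α s t : A)) := by
  unfold cmul
  refine Finsupp.sum_congr fun s _ => ?_
  rw [Finsupp.sum_single_index]
  simp

private lemma cmul_single_left' (C : CrossedSystem A G) (f : G →₀ A) (t : G) (b : A) :
    cmul C (Finsupp.single t b) f
      = f.sum fun s a => Finsupp.single (t * s) (b * C.σ t a * (C.α t s : A)) := by
  unfold cmul
  rw [Finsupp.sum_single_index]
  simp

private lemma cmul_add_right' (C : CrossedSystem A G) (f y z : G →₀ A) :
    cmul C f (y + z) = cmul C f y + cmul C f z := by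
  unfold cmul
  rw [← Finsupp.sum_add]
  refine Finsupp.sum_congr fun s _ => ?_
  rw [Finsupp.sum_add_index'] <;> intros <;> simp [mul_add, add_mul]

private lemma cmul_add_left' (C : CrossedSystem A G) (f y z : G →₀ A) :
    cmul C (y + z) f = cmul C y f + cmul C z f := by
  unfold cmul
  rw [Finsupp.sum_add_index'] <;> intros <;>
    simp [mul_add, add_mul, Finsupp.sum_add, zero_mul, Finsupp.sum_zero_index]

private lemma cmul_zero_right' (C : CrossedSystem A G) (f : G →₀ A) :
    cmul C f 0 = 0 := by
  unfold cmul; simp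

private lemma cmul_zero_left' (C : CrossedSystem A G) (f : G →₀ A) :
    cmul C 0 f = 0 := by
  unfold cmul; simp

def cIsIdeal (C : CrossedSystem A G) (I : Set (G →₀ A)) : Prop :=
  0 ∈ I ∧ (∀ x ∈ I, ∀ y ∈ I, x + y ∈ I) ∧ (∀ x ∈ I, -x ∈ I) ∧
    (∀ x ∈ I, ∀ y : G →₀ A, cmul C y x ∈ I ∧ cmul C x y ∈ I)

theorem stmt_5 (C : CrossedSystem A G)
    (hσ : ∀ g : G, C.σ g = RingEquiv.refl A) (r : G →₀ A) :
    (∀ x : G →₀ A, cmul C r x = cmul C x r) ↔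
      (∀ s : G, ∀ a : A, r s * a = a * r s) ∧
      (∀ s t : G, r (t * s⁻¹) * (C.α (t * s⁻¹) s : A)
          = r (s⁻¹ * t) * (C.α s (s⁻¹ * t) : A)) := by
  have hσ' : ∀ (g : G) (a : A), C.σ g a = a := fun g a => by rw [hσ]; rfl
  constructor
  · intro h
    constructor
    · intro s a
      have := DFunLike.congr_fun (h (Finsupp.single 1 a)) s
      rw [cmul_single_right', cmul_single_left'] at this
      rw [eval_right' _ _ _ _ (by intro u; simp),
          eval_left' _ _ _ _ (by intro u; simp)] at this
      simpa [hσ', C.unit_right, C.unit_left] using this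
    · intro s t
      have := DFunLike.congr_fun (h (Finsupp.single s 1)) t
      rw [cmul_single_right', cmul_single_left'] at this
      rw [eval_right' _ _ _ _ (by intro u; simp),
          eval_left' _ _ _ _ (by intro u; simp)] at this
      simpa [hσ'] using this
  · rintro ⟨h1, h2⟩ x
    induction x using Finsupp.induction with
    | zero => rw [cmul_zero_right', cmul_zero_left']
    | single_add t b f _ _ ih =>
      rw [cmul_add_right', cmul_add_left', ih]
      congr 1
      ext g
      rw [cmul_single_right', cmul_single_left']
      rw [eval_right' _ _ _ _ (by intro u; simp),
          eval_left' _ _ _ _ (by intro u; simp)]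
      simp only [hσ']
      calc r (g * t⁻¹) * b * (C.α (g * t⁻¹) t : A)
          = b * (r (g * t⁻¹) * (C.α (g * t⁻¹) t : A)) := by
            rw [← mul_assoc, h1]
        _ = b * (r (t⁻¹ * g) * (C.α t (t⁻¹ * g) : A)) := by rw [h2 t g]
        _ = b * r (t⁻¹ * g) * (C.α t (t⁻¹ * g) : A) := by rw [mul_assoc]
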